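/- The dummy-insertion map ι : C^ω → C^ω (extending the inductively defined insertion on finite sequences that inserts a fixed dummy move c_0 whenever the same player would move twice in a row) is injective, its image ι(C^ω) is a closed subset of C^ω, and ι(γC^ω) = ι(γ)C^ω ∩ ι(C^ω) for every finite sequence γ. -/

import Mathlib

variable {C A O : Type*}

/-- The prefix of length `n` of an infinite play. -/
def pref (p : ℕ → C) (n : ℕ) : List C := List.ofFn (fun i : Fin n => p (i : ℕ))

/-- Plays compatible with a partial strategy profile. -/
def Plays (s : List C → Option C) : Set (ℕ → C) :=
  {p | ∀ (n : ℕ) (c : C), s (pref p n) = some c → p n = c}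

/-- The history of length n induced by a total strategy profile. -/
def hist (t : List C → C) : ℕ → List C
  | 0 => []
  | n + 1 => hist t n ++ [t (hist t n)]

/-- The play induced by a total strategy profile: p(t)_n = t(p(t)_{<n}). -/
def play (t : List C → C) (n : ℕ) : C := t (hist t n)

open Classical in
/-- Restriction of a partial strategy profile to a set of histories. -/
noncomputable def restr (s : List C → Option C) (X : Set (List C)) (γ : List C) : Option C :=
  if γ ∈ X then s γ else none

/-- Restriction of a total strategy profile to a set of histories (as a partial one). -/
noncomputable def restrT (s : List C → C) (X : Set (List C)) : List C → Option C :=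
  restr (fun γ => some (s γ)) X

/-- γC^* : finite sequences extending γ. -/
def ext (γ : List C) : Set (List C) := {δ | γ <+: δ}

/-- γC^ω : infinite sequences extending γ. -/
def extω (γ : List C) : Set (ℕ → C) := {p | pref p γ.length = γ}


universe u

/-- Quasi-Borel sets of a topological space (Martin 1990). -/
inductive QuasiBorel {X : Type u} [TopologicalSpace X] : Set X → Prop
  | isOpen : ∀ U : Set X, IsOpen U → QuasiBorel U
  | compl : ∀ A : Set X, QuasiBorel A → QuasiBorel Aᶜ
  | iUnion : ∀ f : ℕ → Set X, (∀ n, QuasiBorel (f n)) → QuasiBorel (⋃ n, f n)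
  | sepUnion : ∀ (J : Type u) (B D : J → Set X),
      (∀ j, QuasiBorel (B j)) → (∀ j, IsOpen (D j)) →
      (∀ i j, i ≠ j → Disjoint (D i) (D j)) → (∀ j, B j ⊆ D j) →
      QuasiBorel (⋃ j, B j)

/-- The product of the discrete topology on C^ω. -/
def seqTop (C : Type u) : TopologicalSpace (ℕ → C) :=
  @Pi.topologicalSpace ℕ (fun _ => C) (fun _ => ⊥)

/-- Quasi-Borel subsets of C^ω with the product of the discrete topology. -/
def QB {C : Type u} (W : Set (ℕ → C)) : Prop :=
  @QuasiBorel (ℕ → C) (seqTop C) W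

variable {C : Type u}

open Classical in
/-- Dummy-insertion on finite sequences, processing from prefix `pre`. -/
noncomputable def iotaFrom (D : Set (List C)) (c0 : C) : List C → List C → List C
  | _, [] => []
  | pre, c :: rest =>
      (if ((pre ∈ D) ↔ (pre ++ [c] ∈ D)) then [c, c0] else [c]) ++
        iotaFrom D c0 (pre ++ [c]) rest

/-- Dummy-insertion map ι on finite sequences. -/
noncomputable def iota (D : Set (List C)) (c0 : C) (γ : List C) : List C :=
  iotaFrom D c0 [] γ

/-- Dummy-insertion map ι on infinite sequences: ι(α)_n is the n-th entry of
ι applied to a long enough prefix of α. -/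
noncomputable def iotaSeq (D : Set (List C)) (c0 : C) (α : ℕ → C) (n : ℕ) : C :=
  (iota D c0 (List.ofFn (fun i : Fin (n + 1) => α (i : ℕ)))).getD n c0

section Aux
open Classical
variable {C : Type u}

lemma pref_length' (p : ℕ → C) (n : ℕ) : (pref p n).length = n := by simp [pref]

lemma pref_getElem' (p : ℕ → C) (n i : ℕ) (h : i < (pref p n).length) :
    (pref p n)[i] = p i := by simp [pref]

lemma pref_zero' (p : ℕ → C) : pref p 0 = [] := rfl

lemma pref_succ' (p : ℕ → C) (n : ℕ) : pref p (n + 1) = pref p n ++ [p n] := by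
  simpa [pref, List.concat_eq_append] using List.ofFn_succ' (fun i : Fin (n + 1) => p (i : ℕ))

lemma pref_prefix' (p : ℕ → C) {m n : ℕ} (h : m ≤ n) : pref p m <+: pref p n := by
  induction n with
  | zero => simpa using (Nat.le_zero.mp h) ▸ List.prefix_refl _
  | succ k ih =>
    rcases Nat.lt_or_ge m (k+1) with h' | h'
    · exact (ih (by omega)).trans (by rw [pref_succ']; exact List.prefix_append _ _)
    · have : m = k + 1 := by omega
      subst this; exact List.prefix_refl _

lemma pref_take' (p : ℕ → C) {m n : ℕ} (h : m ≤ n) : (pref p n).take m = pref p m := by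
  obtain ⟨t, ht⟩ := pref_prefix' p h
  rw [← ht]
  have : List.take (pref p m).length (pref p m ++ t) = pref p m := List.take_left
  rwa [pref_length'] at this

variable (D : Set (List C)) (c0 : C)

lemma iotaFrom_append (l1 : List C) : ∀ (pre l2 : List C),
    iotaFrom D c0 pre (l1 ++ l2) = iotaFrom D c0 pre l1 ++ iotaFrom D c0 (pre ++ l1) l2 := by
  induction l1 with
  | nil => intro pre l2; simp [iotaFrom]
  | cons c t ih =>
    intro pre l2
    simp only [List.cons_append, iotaFrom, List.append_eq, ih (pre ++ [c]) l2,
      List.append_assoc, List.singleton_append, List.nil_append]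

lemma iota_nil : iota D c0 ([] : List C) = [] := rfl

lemma iota_snoc (γ : List C) (c : C) :
    iota D c0 (γ ++ [c]) =
      iota D c0 γ ++ (if ((γ ∈ D) ↔ (γ ++ [c] ∈ D)) then [c, c0] else [c]) := by
  unfold iota
  rw [iotaFrom_append]
  simp [iotaFrom]

lemma length_le_iota (γ : List C) : γ.length ≤ (iota D c0 γ).length := by
  induction γ using List.reverseRecOn with
  | nil => simp [iota_nil]
  | append_singleton γ c ih =>
    rw [iota_snoc]
    simp only [List.length_append, List.length_singleton]
    split <;> simp <;> omega

lemma iota_prefix {γ δ : List C} (h : γ <+: δ) : iota D c0 γ <+: iota D c0 δ := by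
  obtain ⟨t, rfl⟩ := h
  exact ⟨iotaFrom D c0 ([] ++ γ) t, (iotaFrom_append D c0 γ [] t).symm⟩

lemma iotaSeq_def (α : ℕ → C) (n : ℕ) :
    iotaSeq D c0 α n = (iota D c0 (pref α (n + 1))).getD n c0 := rfl

lemma iotaSeq_eq_getElem (α : ℕ → C) (m n : ℕ) (h : n < (iota D c0 (pref α m)).length) :
    iotaSeq D c0 α n = (iota D c0 (pref α m))[n] := by
  set M := max m (n + 1) with hM
  have h1 : iota D c0 (pref α m) <+: iota D c0 (pref α M) :=
    iota_prefix D c0 (pref_prefix' α (le_max_left _ _))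
  have h2 : iota D c0 (pref α (n + 1)) <+: iota D c0 (pref α M) :=
    iota_prefix D c0 (pref_prefix' α (le_max_right _ _))
  have hn1 : n < (iota D c0 (pref α (n + 1))).length := by
    have := length_le_iota D c0 (pref α (n + 1))
    rw [pref_length'] at this; omega
  rw [iotaSeq_def, List.getD_eq_getElem _ _ hn1, h2.getElem hn1, h1.getElem h]

lemma pref_iotaSeq (α : ℕ → C) (m : ℕ) :
    pref (iotaSeq D c0 α) (iota D c0 (pref α m)).length = iota D c0 (pref α m) := by
  apply List.ext_getElem
  · simp [pref]
  · intro i h1 h2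
    rw [pref_getElem']
    exact iotaSeq_eq_getElem D c0 α m i h2

lemma iota_pref_succ (α : ℕ → C) (k : ℕ) :
    iota D c0 (pref α (k + 1)) =
      iota D c0 (pref α k) ++
        (if ((pref α k ∈ D) ↔ (pref α k ++ [α k] ∈ D)) then [α k, c0] else [α k]) := by
  rw [pref_succ', iota_snoc]

lemma iotaSeq_recover (α : ℕ → C) (k : ℕ) :
    iotaSeq D c0 α ((iota D c0 (pref α k)).length) = α k := by
  have heq := iota_pref_succ D c0 α k
  have hlen : (iota D c0 (pref α k)).length < (iota D c0 (pref α (k + 1))).length := by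
    rw [heq]; split <;> simp
  have h2 := List.getElem_of_eq heq hlen
  rw [iotaSeq_eq_getElem D c0 α (k + 1) _ hlen, h2,
    List.getElem_append_right (le_refl _)]
  simp only [Nat.sub_self]
  split <;> simp

/-- Recovery: if ι(δ) is a prefix of ι(β) (as infinite sequence), then δ is a prefix of β. -/
lemma recover_list (β : ℕ → C) : ∀ δ : List C,
    pref (iotaSeq D c0 β) (iota D c0 δ).length = iota D c0 δ → pref β δ.length = δ := by
  intro δ
  induction δ using List.reverseRecOn with
  | nil => intro _; rfl
  | append_singleton δ' c ih =>
    intro H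
    have hpre : iota D c0 δ' <+: iota D c0 (δ' ++ [c]) :=
      iota_prefix D c0 (List.prefix_append _ _)
    have hlen : (iota D c0 δ').length ≤ (iota D c0 (δ' ++ [c])).length := hpre.length_le
    have H' : pref (iotaSeq D c0 β) (iota D c0 δ').length = iota D c0 δ' := by
      have := congrArg (List.take (iota D c0 δ').length) H
      rw [pref_take' _ hlen] at this
      obtain ⟨t, ht⟩ := hpre
      rw [← ht, List.take_left] at this
      exact this
    have hβ : pref β δ'.length = δ' := ih H'
    have hN : (iota D c0 δ').length < (iota D c0 (δ' ++ [c])).length := by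
      rw [iota_snoc]; split <;> simp
    have hrec := iotaSeq_recover D c0 β δ'.length
    rw [hβ] at hrec
    have hq : iotaSeq D c0 β (iota D c0 δ').length = c := by
      have hN' : (iota D c0 δ').length <
          (pref (iotaSeq D c0 β) (iota D c0 (δ' ++ [c])).length).length := by
        rw [pref_length']; exact hN
      have h1 := pref_getElem' (iotaSeq D c0 β) (iota D c0 (δ' ++ [c])).length
        (iota D c0 δ').length hN'
      have h2 := List.getElem_of_eq H hN'
      have h3 := List.getElem_of_eq (iota_snoc D c0 δ' c) hN
      rw [← h1, h2, h3, List.getElem_append_right (le_refl _)]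
      simp only [Nat.sub_self]
      split <;> simp
    have hβn : β δ'.length = c := by rw [← hrec]; exact hq
    rw [List.length_append, List.length_singleton, pref_succ', hβ, hβn]

lemma iotaSeq_injective : Function.Injective (iotaSeq D c0) := by
  intro α β h
  have key : ∀ n, pref α n = pref β n := by
    intro n
    induction n with
    | zero => rfl
    | succ k ih =>
      have h1 := iotaSeq_recover D c0 α k
      have h2 := iotaSeq_recover D c0 β k
      rw [ih] at h1
      have hk : α k = β k := by rw [← h1, ← h2, h]
      rw [pref_succ', pref_succ', ih, hk]
  funext n
  have hkey := key (n + 1)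
  rw [pref_succ', pref_succ'] at hkey
  have := List.append_inj_right hkey (by rw [pref_length', pref_length'])
  simpa using this

lemma extw_isOpen (δ : List C) : @IsOpen _ (seqTop C) (extω δ) := by
  letI : TopologicalSpace C := (⊥ : TopologicalSpace C)
  haveI : DiscreteTopology C := ⟨rfl⟩
  have heq : extω δ = ⋂ i : Fin δ.length, (fun p : ℕ → C => p (i : ℕ)) ⁻¹' {δ.get i} := by
    ext p
    simp only [extω, Set.mem_setOf_eq, Set.mem_iInter, Set.mem_preimage, Set.mem_singleton_iff]
    constructor
    · intro h i
      have h2 := List.getElem_of_eq h.symm (i.isLt)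
      have h3 := pref_getElem' p δ.length (i : ℕ) (by rw [pref_length']; exact i.isLt)
      rw [h3] at h2
      rw [← h2]
      simp [List.get_eq_getElem]
    · intro h
      apply List.ext_getElem (pref_length' p δ.length)
      intro i h1 h2
      rw [pref_getElem']
      exact h ⟨i, h2⟩
  rw [heq]
  exact isOpen_iInter_of_finite fun i =>
    (continuous_apply (i : ℕ)).isOpen_preimage _ (isOpen_discrete _)

noncomputable def approx (D : Set (List C)) (c0 : C) (p : ℕ → C) : ℕ → List C
  | 0 => []
  | n + 1 => approx D c0 p n ++ [p (iota D c0 (approx D c0 p n)).length]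

lemma approx_length (p : ℕ → C) (n : ℕ) : (approx D c0 p n).length = n := by
  induction n with
  | zero => rfl
  | succ k ih => simp [approx, ih]

lemma approx_spec (p : ℕ → C)
    (hp : ∀ n, ∃ q ∈ Set.range (iotaSeq D c0), pref q n = pref p n) (n : ℕ) :
    pref p (iota D c0 (approx D c0 p n)).length = iota D c0 (approx D c0 p n) := by
  induction n with
  | zero => rfl
  | succ k ih =>
    have hstep : approx D c0 p (k + 1) =
        approx D c0 p k ++ [p (iota D c0 (approx D c0 p k)).length] := rfl
    set A := approx D c0 p k with hA
    set L := (iota D c0 A).length with hL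
    set c := p L with hc
    rw [hstep]
    by_cases hcond : (A ∈ D ↔ A ++ [c] ∈ D)
    · -- dummy inserted: need pref p (L+2) = iota A ++ [c, c0]
      have hlen2 : (iota D c0 (A ++ [c])).length = L + 2 := by
        rw [iota_snoc, if_pos hcond]; simp [hL]
      obtain ⟨q, ⟨β, rfl⟩, hq⟩ := hp (L + 2)
      -- recover β's prefix
      have hqL : pref (iotaSeq D c0 β) L = iota D c0 A := by
        have h := congrArg (List.take L) hq
        rw [pref_take' _ (by omega), pref_take' _ (by omega)] at h
        exact h.trans ih
      have hβA : pref β A.length = A := recover_list D c0 β A (by rw [← hL]; exact hqL)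
      have hrec := iotaSeq_recover D c0 β A.length
      rw [hβA] at hrec
      have hβc : β A.length = c := by
        have hlt : L < (pref (iotaSeq D c0 β) (L + 2)).length := by
          rw [pref_length']; omega
        have h1 := pref_getElem' (iotaSeq D c0 β) (L + 2) L hlt
        have h2 := List.getElem_of_eq hq hlt
        have h3 := pref_getElem' p (L + 2) L (by rw [pref_length']; omega)
        rw [h1] at h2
        rw [h3] at h2
        exact hrec.symm.trans h2
      have hβsucc : pref β (A.length + 1) = A ++ [c] := by
        rw [pref_succ', hβA, hβc]
      have hfull := pref_iotaSeq D c0 β (A.length + 1)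
      rw [hβsucc] at hfull
      rw [hlen2] at hfull
      have hqfull : pref p (L + 2) = iota D c0 (A ++ [c]) := by
        rw [← hq, hfull]
      rw [hlen2]
      exact hqfull
    · -- no dummy: pref p (L+1) = iota A ++ [c]
      have hlen1 : (iota D c0 (A ++ [c])).length = L + 1 := by
        rw [iota_snoc, if_neg hcond]; simp [hL]
      rw [hlen1, pref_succ', iota_snoc, if_neg hcond, ih]

lemma range_iotaSeq_closed : @IsClosed _ (seqTop C) (Set.range (iotaSeq D c0)) := by
  letI : TopologicalSpace C := (⊥ : TopologicalSpace C)
  letI : TopologicalSpace (ℕ → C) := seqTop C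
  rw [← isOpen_compl_iff, isOpen_iff_forall_mem_open]
  intro p hp
  by_cases hap : ∀ n, ∃ q ∈ Set.range (iotaSeq D c0), pref q n = pref p n
  · exfalso
    apply hp
    set α : ℕ → C := fun n => p (iota D c0 (approx D c0 p n)).length with hα
    refine ⟨α, ?_⟩
    have hAn : ∀ n, pref α n = approx D c0 p n := by
      intro n
      induction n with
      | zero => rfl
      | succ k ih => rw [pref_succ', ih]; rfl
    funext n
    have hm := approx_spec D c0 p hap (n + 1)
    have hLn : n < (iota D c0 (approx D c0 p (n + 1))).length := by
      have := length_le_iota D c0 (approx D c0 p (n + 1))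
      rw [approx_length] at this
      omega
    have h1 := pref_iotaSeq D c0 α (n + 1)
    rw [hAn (n + 1)] at h1
    have hboth := h1.trans hm.symm
    have h2 := List.getElem_of_eq hboth (by rw [pref_length']; exact hLn)
    rw [pref_getElem', pref_getElem'] at h2
    exact h2
  · push_neg at hap
    obtain ⟨n, hn⟩ := hap
    refine ⟨extω (pref p n), ?_, extw_isOpen _, ?_⟩
    · intro q hq hqr
      have hq' : pref q n = pref p n := by
        have : pref q (pref p n).length = pref p n := hq
        rwa [pref_length'] at this
      exact hn q hqr hq'
    · show pref p (pref p n).length = pref p n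
      rw [pref_length']

end Aux

/-- The dummy-insertion map ι on infinite sequences is injective,
has closed image, and satisfies ι(γC^ω) = ι(γ)C^ω ∩ ι(C^ω). -/
theorem iota_properties {C : Type u} [Nonempty C] (D : Set (List C)) (c0 : C)
    (hD : ([] : List C) ∈ D) :
    Function.Injective (iotaSeq D c0) ∧
    @IsClosed _ (seqTop C) (Set.range (iotaSeq D c0)) ∧
    ∀ γ : List C,
      iotaSeq D c0 '' extω γ = extω (iota D c0 γ) ∩ Set.range (iotaSeq D c0) := by
  refine ⟨iotaSeq_injective D c0, range_iotaSeq_closed D c0, ?_⟩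
  intro γ
  ext p
  constructor
  · rintro ⟨α, hα, rfl⟩
    refine ⟨?_, α, rfl⟩
    have h := pref_iotaSeq D c0 α γ.length
    rw [show pref α γ.length = γ from hα] at h
    exact h
  · rintro ⟨hp, α, rfl⟩
    exact ⟨α, recover_list D c0 α γ hp, rfl⟩
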